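/- Let L be a Hermitian Mackey functor and Mₙ(L) the matrix Hermitian Mackey functor. The distributivity axiom holds for the matrix action: for all A, A' ∈ Mₙ(L(ℤ/2)) and B ∈ Mₙ(L)(*), (A + A')•B = A•B + A'•B + T(A·R(B)·w(A')), where T is the matrix transfer and w(A') is the conjugate transpose. -/
import Mathlib


/-- A Hermitian ℤ/2-Mackey functor: a ring `U = L(ℤ/2)` with anti-involution `w`,
an abelian group `F = L(*)`, restriction `R`, transfer `T` with `R (T a) = a + w a`,
and a multiplicative left action `act` of `U` on `F`. -/
structure HermitianMackey (U F : Type) [Ring U] [AddCommGroup F] where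
  w : U → U
  w_add : ∀ a a' : U, w (a + a') = w a + w a'
  w_invol : ∀ a : U, w (w a) = a
  w_mul : ∀ a a' : U, w (a * a') = w a' * w a
  w_one : w 1 = 1
  R : F → U
  R_add : ∀ b b' : F, R (b + b') = R b + R b'
  R_equiv : ∀ b : F, w (R b) = R b
  T : U → F
  T_add : ∀ a a' : U, T (a + a') = T a + T a'
  T_equiv : ∀ a : U, T (w a) = T a
  RT : ∀ a : U, R (T a) = a + w a
  act : U → F → F
  act_add : ∀ (a : U) (b b' : F), act a (b + b') = act a b + act a b'
  act_mul : ∀ (a a' : U) (b : F), act (a * a') b = act a (act a' b)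
  act_one : ∀ b : F, act 1 b = b
  R_act : ∀ (a : U) (b : F), R (act a b) = a * R b * w a
  act_T : ∀ a c : U, act a (T c) = T (a * c * w a)
  add_act : ∀ (a a' : U) (b : F),
    act (a + a') b = act a b + act a' b + T (a * R b * w a')
  zero_act : ∀ b : F, act 0 b = 0

variable {U F : Type} [Ring U] [AddCommGroup F]

/-- The conjugate transpose `w(A)ᵢⱼ = w(Aⱼᵢ)`, the anti-involution of `Mₙ(L)(ℤ/2)`. -/
def conjT (L : HermitianMackey U F) {n : ℕ} (A : Matrix (Fin n) (Fin n) U) :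
    Matrix (Fin n) (Fin n) U :=
  Matrix.of fun i j => L.w (A j i)

/-- The restriction `R : Mₙ(L)(*) → Mₙ(L(ℤ/2))`. An element of `Mₙ(L)(*)` is
recorded as a pair `(Boff, Bdiag)`: the entries `Boff i j` for `i < j` lie in
`L(ℤ/2)` and the diagonal entries `Bdiag i` lie in `L(*)`; the restriction fills
in the lower entries via the involution `w`. -/
def mRest (L : HermitianMackey U F) {n : ℕ}
    (Boff : Fin n → Fin n → U) (Bdiag : Fin n → F) :
    Matrix (Fin n) (Fin n) U :=
  Matrix.of fun i j =>
    if i < j then Boff i j else if j < i then L.w (Boff j i) else L.R (Bdiag i)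

/-- Off-diagonal part of the matrix transfer `T : Mₙ(L(ℤ/2)) → Mₙ(L)(*)`:
`T(A)ᵢⱼ = Aᵢⱼ + w(Aⱼᵢ)` for `i < j`. -/
def mTransOff (L : HermitianMackey U F) {n : ℕ} (A : Matrix (Fin n) (Fin n) U) :
    Fin n → Fin n → U :=
  fun i j => A i j + L.w (A j i)

/-- Diagonal part of the matrix transfer: `T(A)ᵢᵢ = T(Aᵢᵢ)`. -/
def mTransDiag (L : HermitianMackey U F) {n : ℕ} (A : Matrix (Fin n) (Fin n) U) :
    Fin n → F :=
  fun i => L.T (A i i)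

/-- Off-diagonal part of the action of `Mₙ(L(ℤ/2))` on `Mₙ(L)(*)`:
`(A • B)ᵢⱼ = (A · R(B) · w(A))ᵢⱼ` for `i < j`. -/
def mActOff (L : HermitianMackey U F) {n : ℕ} (A : Matrix (Fin n) (Fin n) U)
    (Boff : Fin n → Fin n → U) (Bdiag : Fin n → F) : Fin n → Fin n → U :=
  fun i j => (A * mRest L Boff Bdiag * conjT L A) i j

/-- Diagonal part of the action of `Mₙ(L(ℤ/2))` on `Mₙ(L)(*)`:
`(A • B)ᵢᵢ = T(Σ_{k<l} Aᵢₖ · R(B)ₖₗ · w(Aᵢₗ)) + Σₖ Aᵢₖ • Bₖₖ`. -/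
def mActDiag (L : HermitianMackey U F) {n : ℕ} (A : Matrix (Fin n) (Fin n) U)
    (Boff : Fin n → Fin n → U) (Bdiag : Fin n → F) : Fin n → F :=
  fun i =>
    (∑ k : Fin n, ∑ l : Fin n,
        if k < l then L.T (A i k * mRest L Boff Bdiag k l * L.w (A i l)) else 0)
      + ∑ k : Fin n, L.act (A i k) (Bdiag k)

section Aux

variable {U F : Type} [Ring U] [AddCommGroup F]

private lemma HM_w_zero (L : HermitianMackey U F) : L.w 0 = 0 := by
  have h : L.w 0 = L.w 0 + L.w 0 := by simpa using L.w_add 0 0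
  exact (left_eq_add.mp h)

private lemma HM_T_zero (L : HermitianMackey U F) : L.T 0 = 0 := by
  have h : L.T 0 = L.T 0 + L.T 0 := by simpa using L.T_add 0 0
  exact (left_eq_add.mp h)

private def wHom (L : HermitianMackey U F) : U →+ U where
  toFun := L.w
  map_zero' := HM_w_zero L
  map_add' := L.w_add

private def THom (L : HermitianMackey U F) : U →+ F where
  toFun := L.T
  map_zero' := HM_T_zero L
  map_add' := L.T_add

@[simp] private lemma wHom_apply (L : HermitianMackey U F) (a : U) : wHom L a = L.w a := rfl
@[simp] private lemma THom_apply (L : HermitianMackey U F) (a : U) : THom L a = L.T a := rfl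

private lemma w_sum (L : HermitianMackey U F) {α : Type*} (s : Finset α) (f : α → U) :
    L.w (∑ x ∈ s, f x) = ∑ x ∈ s, L.w (f x) := map_sum (wHom L) f s

private lemma T_sum (L : HermitianMackey U F) {α : Type*} (s : Finset α) (f : α → U) :
    L.T (∑ x ∈ s, f x) = ∑ x ∈ s, L.T (f x) := map_sum (THom L) f s

private lemma mRest_herm (L : HermitianMackey U F) {n : ℕ}
    (Boff : Fin n → Fin n → U) (Bdiag : Fin n → F) (k l : Fin n) :
    L.w (mRest L Boff Bdiag l k) = mRest L Boff Bdiag k l := by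
  rcases lt_trichotomy k l with h | h | h
  · simp [mRest, h, lt_asymm h, L.w_invol]
  · simp [mRest, h, lt_irrefl, L.R_equiv]
  · simp [mRest, h, lt_asymm h]

private lemma conjT_add (L : HermitianMackey U F) {n : ℕ}
    (A A' : Matrix (Fin n) (Fin n) U) :
    conjT L (A + A') = conjT L A + conjT L A' := by
  ext i j
  simp [conjT, L.w_add]

/-- entrywise expansion of `X * M * conjT Y`. -/
private lemma triple_entry (L : HermitianMackey U F) {n : ℕ}
    (Boff : Fin n → Fin n → U) (Bdiag : Fin n → F)
    (X Y : Matrix (Fin n) (Fin n) U) (i j : Fin n) :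
    (X * mRest L Boff Bdiag * conjT L Y) i j =
      ∑ l : Fin n, ∑ k : Fin n,
        X i k * mRest L Boff Bdiag k l * L.w (Y j l) := by
  simp [Matrix.mul_apply, Finset.sum_mul, conjT]

private lemma conj_entry (L : HermitianMackey U F) {n : ℕ}
    (Boff : Fin n → Fin n → U) (Bdiag : Fin n → F)
    (X Y : Matrix (Fin n) (Fin n) U) (i j : Fin n) :
    L.w ((X * mRest L Boff Bdiag * conjT L Y) j i) =
      (Y * mRest L Boff Bdiag * conjT L X) i j := by
  rw [triple_entry, triple_entry, w_sum, Finset.sum_comm]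
  refine Finset.sum_congr rfl fun k _ => ?_
  rw [w_sum]
  refine Finset.sum_congr rfl fun l _ => ?_
  simp only [L.w_mul, L.w_invol, mRest_herm]
  rw [mul_assoc]

private def S1 (L : HermitianMackey U F) {n : ℕ}
    (Boff : Fin n → Fin n → U) (Bdiag : Fin n → F)
    (X Y : Matrix (Fin n) (Fin n) U) (i : Fin n) : F :=
  ∑ k : Fin n, ∑ l : Fin n,
    if k < l then L.T (X i k * mRest L Boff Bdiag k l * L.w (Y i l)) else 0

/-- transfer of the diagonal entry of `X * M * conjT Y`. -/
private lemma T_entry (L : HermitianMackey U F) {n : ℕ}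
    (Boff : Fin n → Fin n → U) (Bdiag : Fin n → F)
    (X Y : Matrix (Fin n) (Fin n) U) (i : Fin n) :
    L.T ((X * mRest L Boff Bdiag * conjT L Y) i i) =
      S1 L Boff Bdiag X Y i + S1 L Boff Bdiag Y X i +
        ∑ k : Fin n, L.T (X i k * L.R (Bdiag k) * L.w (Y i k)) := by
  rw [triple_entry, T_sum]
  simp only [T_sum, S1]
  rw [Finset.sum_comm]
  have tri : ∀ k l : Fin n,
      L.T (X i k * mRest L Boff Bdiag k l * L.w (Y i l)) =
        (if k < l then L.T (X i k * mRest L Boff Bdiag k l * L.w (Y i l)) else 0) +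
        (if l < k then L.T (X i k * mRest L Boff Bdiag k l * L.w (Y i l)) else 0) +
        (if k = l then L.T (X i k * mRest L Boff Bdiag k l * L.w (Y i l)) else 0) := by
    intro k l
    rcases lt_trichotomy k l with h | h | h
    · simp [h, lt_asymm h, h.ne]
    · simp [h, lt_irrefl]
    · simp [h, lt_asymm h, (ne_of_lt h).symm]
  have h2 : (∑ k : Fin n, ∑ l : Fin n,
        if l < k then L.T (X i k * mRest L Boff Bdiag k l * L.w (Y i l)) else 0) =
      ∑ k : Fin n, ∑ l : Fin n,
        if k < l then L.T (Y i k * mRest L Boff Bdiag k l * L.w (X i l)) else 0 := by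
    rw [Finset.sum_comm]
    refine Finset.sum_congr rfl fun k _ => Finset.sum_congr rfl fun l _ => ?_
    by_cases h : k < l
    · simp only [h, if_true]
      rw [← L.T_equiv (Y i k * mRest L Boff Bdiag k l * L.w (X i l))]
      congr 1
      simp only [L.w_mul, L.w_invol, mRest_herm]
      rw [mul_assoc]
    · simp [h]
  have h3 : (∑ k : Fin n, ∑ l : Fin n,
        if k = l then L.T (X i k * mRest L Boff Bdiag k l * L.w (Y i l)) else 0) =
      ∑ k : Fin n, L.T (X i k * L.R (Bdiag k) * L.w (Y i k)) := by
    refine Finset.sum_congr rfl fun k _ => ?_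
    rw [Finset.sum_ite_eq]
    simp [mRest]
  calc (∑ k : Fin n, ∑ l : Fin n, L.T (X i k * mRest L Boff Bdiag k l * L.w (Y i l)))
      = (∑ k : Fin n, ∑ l : Fin n,
          if k < l then L.T (X i k * mRest L Boff Bdiag k l * L.w (Y i l)) else 0) +
        (∑ k : Fin n, ∑ l : Fin n,
          if l < k then L.T (X i k * mRest L Boff Bdiag k l * L.w (Y i l)) else 0) +
        (∑ k : Fin n, ∑ l : Fin n,
          if k = l then L.T (X i k * mRest L Boff Bdiag k l * L.w (Y i l)) else 0) := by
        simp only [← Finset.sum_add_distrib]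
        exact Finset.sum_congr rfl fun k _ => Finset.sum_congr rfl fun l _ => tri k l
    _ = _ := by rw [h2, h3]

end Aux

/-- the distributivity axiom for the matrix action:
`(A + A') • B = A • B + A' • B + T(A · R(B) · w(A'))`. -/
theorem matrix_action_distrib {U F : Type} [Ring U] [AddCommGroup F]
    (L : HermitianMackey U F) (n : ℕ)
    (A A' : Matrix (Fin n) (Fin n) U)
    (Boff : Fin n → Fin n → U) (Bdiag : Fin n → F) :
    (∀ i j : Fin n, i < j →
        mActOff L (A + A') Boff Bdiag i j =
          mActOff L A Boff Bdiag i j + mActOff L A' Boff Bdiag i j +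
            mTransOff L (A * mRest L Boff Bdiag * conjT L A') i j) ∧
    (∀ i : Fin n,
        mActDiag L (A + A') Boff Bdiag i =
          mActDiag L A Boff Bdiag i + mActDiag L A' Boff Bdiag i +
            mTransDiag L (A * mRest L Boff Bdiag * conjT L A') i) := by
  constructor
  · intro i j hij
    have hexp : (A + A') * mRest L Boff Bdiag * conjT L (A + A') =
        A * mRest L Boff Bdiag * conjT L A + A * mRest L Boff Bdiag * conjT L A' +
          A' * mRest L Boff Bdiag * conjT L A + A' * mRest L Boff Bdiag * conjT L A' := by
      rw [conjT_add]; noncomm_ring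
    simp only [mActOff, mTransOff, hexp, Matrix.add_apply]
    rw [conj_entry L Boff Bdiag A A' i j]
    abel
  · intro i
    have expand : ∀ k l : Fin n,
        (if k < l then
            L.T ((A i k + A' i k) * mRest L Boff Bdiag k l * L.w (A i l + A' i l))
          else 0) =
        (if k < l then L.T (A i k * mRest L Boff Bdiag k l * L.w (A i l)) else 0) +
        (if k < l then L.T (A i k * mRest L Boff Bdiag k l * L.w (A' i l)) else 0) +
        (if k < l then L.T (A' i k * mRest L Boff Bdiag k l * L.w (A i l)) else 0) +
        (if k < l then L.T (A' i k * mRest L Boff Bdiag k l * L.w (A' i l)) else 0) := by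
      intro k l
      by_cases h : k < l
      · simp only [h, if_true, Matrix.add_apply]
        rw [L.w_add]
        have hh : (A i k + A' i k) * mRest L Boff Bdiag k l * (L.w (A i l) + L.w (A' i l)) =
            A i k * mRest L Boff Bdiag k l * L.w (A i l) +
            A i k * mRest L Boff Bdiag k l * L.w (A' i l) +
            A' i k * mRest L Boff Bdiag k l * L.w (A i l) +
            A' i k * mRest L Boff Bdiag k l * L.w (A' i l) := by noncomm_ring
        rw [hh, L.T_add, L.T_add, L.T_add]
      · simp [h]
    simp only [mActDiag, mTransDiag, Matrix.add_apply, expand, L.add_act,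
      Finset.sum_add_distrib]
    rw [T_entry L Boff Bdiag A A' i]
    simp only [S1, Matrix.add_apply]
    abel
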